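/- arXiv:2502.16192 — 3 statements merged into one kernel-verified Lean document; each statement's English description precedes it below -/
import Mathlib

section
/- Let (X,F,μ) and (Y,G,ν) be probability spaces, λ = μ × ν, and for each n let gₙ : X → ℝ and hₙ : Y → ℝ be measurable with |gₙ| ≤ 1, |hₙ| ≤ 1, ∫ gₙ dμ = 0, ∫ hₙ dν = 0. If (uₙ) is a real sequence with ∑ₙ |uₙ| ≤ 1, then f(x,y) = 1 + ∑ₙ uₙ gₙ(x) hₙ(y) is a probability density with respect to λ whose induced measure has marginals μ and ν. -/
open MeasureTheory

theorem stmt2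
    {X Y : Type*} [MeasurableSpace X] [MeasurableSpace Y]
    (μ : Measure X) (ν : Measure Y)
    [IsProbabilityMeasure μ] [IsProbabilityMeasure ν]
    (g : ℕ → X → ℝ) (h : ℕ → Y → ℝ) (u : ℕ → ℝ)
    (hg : ∀ n, Measurable (g n)) (hh : ∀ n, Measurable (h n))
    (hgb : ∀ n x, |g n x| ≤ 1) (hhb : ∀ n y, |h n y| ≤ 1)
    (hgi : ∀ n, ∫ x, g n x ∂μ = 0) (hhi : ∀ n, ∫ y, h n y ∂ν = 0)
    (hu : Summable (fun n => |u n|)) (hu1 : ∑' n, |u n| ≤ 1)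
    (f : X × Y → ℝ)
    (hf : ∀ z : X × Y, f z = 1 + ∑' n, u n * g n z.1 * h n z.2) :
    (∀ z, 0 ≤ f z) ∧ (∫ z, f z ∂(μ.prod ν)) = 1 ∧
    IsProbabilityMeasure ((μ.prod ν).withDensity (fun z => ENNReal.ofReal (f z))) ∧
    (∀ A : Set X, MeasurableSet A →
      (μ.prod ν).withDensity (fun z => ENNReal.ofReal (f z))
        (A ×ˢ (Set.univ : Set Y)) = μ A) ∧
    (∀ B : Set Y, MeasurableSet B →
      (μ.prod ν).withDensity (fun z => ENNReal.ofReal (f z))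
        ((Set.univ : Set X) ×ˢ B) = ν B) := by
  set lam := μ.prod ν with hlam
  set F : ℕ → X × Y → ℝ := fun n z => u n * g n z.1 * h n z.2 with hF
  -- termwise bound
  have hFb : ∀ n z, ‖F n z‖ ≤ |u n| := by
    intro n z
    have := hgb n z.1; have := hhb n z.2
    have h1 : ‖F n z‖ = |u n| * |g n z.1| * |h n z.2| := by
      simp [hF, abs_mul]
    rw [h1]
    calc |u n| * |g n z.1| * |h n z.2| ≤ |u n| * 1 * 1 := by
          apply mul_le_mul (mul_le_mul le_rfl (hgb n z.1) (abs_nonneg _) (abs_nonneg _))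
            (hhb n z.2) (abs_nonneg _)
          positivity
      _ = |u n| := by ring
  have hsum : ∀ z, Summable (fun n => F n z) := fun z =>
    Summable.of_norm_bounded hu (fun n => hFb n z)
  have hsumn : ∀ z, Summable (fun n => ‖F n z‖) := fun z =>
    Summable.of_nonneg_of_le (fun n => norm_nonneg _) (fun n => hFb n z) hu
  -- f nonneg and bounded
  have hSb : ∀ z, |∑' n, F n z| ≤ 1 := by
    intro z
    have h1 : ‖∑' n, F n z‖ ≤ ∑' n, ‖F n z‖ := norm_tsum_le_tsum_norm (hsumn z)
    have h2 : ∑' n, ‖F n z‖ ≤ ∑' n, |u n| := Summable.tsum_le_tsum (fun n => hFb n z) (hsumn z) hu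
    rw [Real.norm_eq_abs] at h1
    linarith
  have hpos : ∀ z, 0 ≤ f z := by
    intro z
    rw [hf z]
    have := (abs_le.mp (hSb z)).1
    linarith
  have hfb : ∀ z, f z ≤ 2 := by
    intro z
    rw [hf z]
    have := (abs_le.mp (hSb z)).2
    linarith
  -- measurability
  have hFm : ∀ n, Measurable (F n) := by
    intro n
    exact (measurable_const.mul ((hg n).comp measurable_fst)).mul ((hh n).comp measurable_snd)
  have hS : Measurable (fun z => ∑' n, F n z) := by
    apply measurable_of_tendsto_metrizable (f := fun N z => ∑ n ∈ Finset.range N, F n z)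
    · exact fun N => Finset.measurable_sum _ (fun n _ => hFm n)
    · rw [tendsto_pi_nhds]
      exact fun z => (hsum z).hasSum.tendsto_sum_nat
  have hfm : Measurable f := by
    have : f = fun z => 1 + ∑' n, F n z := funext hf
    rw [this]
    exact measurable_const.add hS
  -- key : set integral formula
  have hne : (∑' n, (‖u n‖₊ : ENNReal)) ≠ ⊤ := by
    rw [ENNReal.tsum_coe_ne_top_iff_summable]
    rw [← NNReal.summable_coe]
    simpa [Real.norm_eq_abs] using hu
  have hFint : ∀ n (H : Set (X × Y)), Integrable (F n) (lam.restrict H) := by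
    intro n H
    refine Integrable.mono' (integrable_const (|u n|)) (hFm n).aestronglyMeasurable ?_
    filter_upwards with z using hFb n z
  have key : ∀ (H : Set (X × Y)), MeasurableSet H →
      ∫ z in H, f z ∂lam = (lam H).toReal + ∑' n, ∫ z in H, F n z ∂lam := by
    intro H hH
    have h1 : ∫ z in H, f z ∂lam = ∫ z in H, (1 + ∑' n, F n z) ∂lam := by
      apply integral_congr_ae
      filter_upwards with z using hf z
    rw [h1]
    have hSint : Integrable (fun z => ∑' n, F n z) (lam.restrict H) := by
      refine Integrable.mono' (integrable_const 1) hS.aestronglyMeasurable ?_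
      filter_upwards with z using hSb z
    rw [integral_add (integrable_const 1) hSint, integral_const]
    have h2 : ∫ z in H, (∑' n, F n z) ∂lam = ∑' n, ∫ z in H, F n z ∂lam := by
      apply integral_tsum (fun n => (hFm n).aestronglyMeasurable)
      refine ne_top_of_le_ne_top hne (ENNReal.tsum_le_tsum (fun n => ?_))
      calc ∫⁻ z, ‖F n z‖₊ ∂(lam.restrict H) ≤ ∫⁻ _, (‖u n‖₊ : ENNReal) ∂(lam.restrict H) := by
            apply lintegral_mono
            intro z
            simpa [ENNReal.coe_le_coe, ← NNReal.coe_le_coe] using hFb n z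
        _ = (‖u n‖₊ : ENNReal) * (lam.restrict H Set.univ) := by
            rw [lintegral_const]
        _ ≤ (‖u n‖₊ : ENNReal) * 1 := by
            apply mul_le_mul_right
            rw [Measure.restrict_apply_univ]
            exact le_trans (measure_mono (Set.subset_univ _)) (by simp [hlam])
        _ = ‖u n‖₊ := mul_one _
    rw [h2]
    simp [smul_eq_mul]
    rfl
  -- set integrals over rectangles
  have hrectA : ∀ (A : Set X), MeasurableSet A → ∫ z in A ×ˢ Set.univ, f z ∂lam = (μ A).toReal := by
    intro A hA
    rw [key _ (hA.prod MeasurableSet.univ)]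
    have : ∀ n, ∫ z in A ×ˢ Set.univ, F n z ∂lam = 0 := by
      intro n
      have : ∫ z in A ×ˢ (Set.univ : Set Y), (fun x => u n * g n x) z.1 * h n z.2 ∂lam
          = (∫ x in A, u n * g n x ∂μ) * ∫ y in Set.univ, h n y ∂ν := by
        rw [hlam]; exact setIntegral_prod_mul (L := ℝ) (fun x => u n * g n x) (h n) _ _
      simp only [hF]
      rw [show (fun z : X × Y => u n * g n z.1 * h n z.2) = fun z => (fun x => u n * g n x) z.1 * h n z.2 from rfl] at *
      rw [this, Measure.restrict_univ, hhi n, mul_zero]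
    rw [tsum_congr this, tsum_zero, add_zero, hlam, Measure.prod_prod, measure_univ, mul_one]
  have hrectB : ∀ (B : Set Y), MeasurableSet B → ∫ z in Set.univ ×ˢ B, f z ∂lam = (ν B).toReal := by
    intro B hB
    rw [key _ (MeasurableSet.univ.prod hB)]
    have : ∀ n, ∫ z in (Set.univ : Set X) ×ˢ B, F n z ∂lam = 0 := by
      intro n
      have : ∫ z in (Set.univ : Set X) ×ˢ B, (fun x => u n * g n x) z.1 * h n z.2 ∂lam
          = (∫ x in Set.univ, u n * g n x ∂μ) * ∫ y in B, h n y ∂ν := by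
        rw [hlam]; exact setIntegral_prod_mul (L := ℝ) (fun x => u n * g n x) (h n) _ _
      simp only [hF]
      rw [show (fun z : X × Y => u n * g n z.1 * h n z.2) = fun z => (fun x => u n * g n x) z.1 * h n z.2 from rfl] at *
      rw [this, Measure.restrict_univ, integral_const_mul, hgi n, mul_zero, zero_mul]
    rw [tsum_congr this, tsum_zero, add_zero, hlam, Measure.prod_prod, measure_univ, one_mul]
  -- withDensity values
  have hwd : ∀ (H : Set (X × Y)), MeasurableSet H →
      lam.withDensity (fun z => ENNReal.ofReal (f z)) H = ENNReal.ofReal (∫ z in H, f z ∂lam) := by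
    intro H hH
    rw [withDensity_apply _ hH]
    rw [← ofReal_integral_eq_lintegral_ofReal]
    · refine Integrable.mono' (integrable_const 2) hfm.aestronglyMeasurable ?_
      filter_upwards with z
      rw [Real.norm_eq_abs, abs_of_nonneg (hpos z)]
      exact hfb z
    · filter_upwards with z using hpos z
  have hint1 : (∫ z, f z ∂lam) = 1 := by
    have := hrectA Set.univ MeasurableSet.univ
    rw [Set.univ_prod_univ, Measure.restrict_univ] at this
    rw [this, measure_univ, ENNReal.toReal_one]
  refine ⟨hpos, hint1, ?_, ?_, ?_⟩
  · constructor
    rw [← Set.univ_prod_univ, hwd _ (MeasurableSet.univ.prod MeasurableSet.univ),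
      Set.univ_prod_univ, Measure.restrict_univ, hint1, ENNReal.ofReal_one]
  · intro A hA
    rw [hwd _ (hA.prod MeasurableSet.univ), hrectA A hA,
      ENNReal.ofReal_toReal (measure_ne_top μ A)]
  · intro B hB
    rw [hwd _ (MeasurableSet.univ.prod hB), hrectB B hB,
      ENNReal.ofReal_toReal (measure_ne_top ν B)]
end

section
/- Let p be a probability measure on [0,1]² with both marginals equal to Lebesgue measure m on [0,1]. Fix k ≥ 1 and define g as the piecewise-constant density with d_{j,h} = k² p(Iⱼ × I_h) on the grid cells Iⱼ × I_h. Then the bounded Lipschitz distance between p and P_g satisfies d_BL(p, P_g) ≤ 2√2 / k, where d_BL(p,q) = sup over 1-Lipschitz φ : [0,1]² → [−1,1] of |∫ φ dp − ∫ φ dq|. -/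
open MeasureTheory Set

theorem stmt10
    (k : ℕ) (hk : 1 ≤ k)
    (I : Fin k → Set ℝ)
    (hI : ∀ j : Fin k, I j = Ioc ((j : ℝ) / k) (((j : ℝ) + 1) / k))
    (m : Measure ℝ) (hm : m = volume.restrict (Icc (0:ℝ) 1))
    (p : Measure (ℝ × ℝ)) [IsProbabilityMeasure p]
    (hp1 : p.map Prod.fst = m) (hp2 : p.map Prod.snd = m)
    (d : Fin k → Fin k → ℝ)
    (hd : ∀ j h, d j h = (k : ℝ) ^ 2 * (p ((I j) ×ˢ (I h))).toReal)
    (g : ℝ × ℝ → ℝ)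
    (hg : ∀ z, g z = ∑ j : Fin k, ∑ h : Fin k,
      d j h * Set.indicator (I j) 1 z.1 * Set.indicator (I h) 1 z.2)
    (Pg : Measure (ℝ × ℝ))
    (hPg : Pg = (m.prod m).withDensity (fun z => ENNReal.ofReal (g z))) :
    ∀ φ : ℝ × ℝ → ℝ, Measurable φ →
      (∀ z w : ℝ × ℝ, z ∈ Icc (0:ℝ) 1 ×ˢ Icc (0:ℝ) 1 →
        w ∈ Icc (0:ℝ) 1 ×ˢ Icc (0:ℝ) 1 →
        |φ z - φ w| ≤ Real.sqrt ((z.1 - w.1) ^ 2 + (z.2 - w.2) ^ 2)) →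
      (∀ z ∈ Icc (0:ℝ) 1 ×ˢ Icc (0:ℝ) 1, φ z ∈ Icc (-1 : ℝ) 1) →
      |∫ z, φ z ∂p - ∫ z, φ z ∂Pg| ≤ 2 * Real.sqrt 2 / k := by
  subst hm hPg
  intro φ hφm hφlip hφbd
  have hk0 : (0:ℝ) < k := by exact_mod_cast hk
  -- basic facts about I
  have hImeas : ∀ j, MeasurableSet (I j) := by
    intro j; rw [hI]; exact measurableSet_Ioc
  have hIsubIoc : ∀ j : Fin k, I j ⊆ Ioc (0:ℝ) 1 := by
    intro j
    rw [hI]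
    intro x hx
    have hjk : ((j:ℕ):ℝ) + 1 ≤ k := by exact_mod_cast j.isLt
    constructor
    · exact lt_of_le_of_lt (by positivity) hx.1
    · exact hx.2.trans (by rw [div_le_one hk0]; exact hjk)
  have hIsub : ∀ j : Fin k, I j ⊆ Icc (0:ℝ) 1 :=
    fun j => (hIsubIoc j).trans Ioc_subset_Icc_self
  have hIdisj : Pairwise (Function.onFun Disjoint I) := by
    have key : ∀ a b : Fin k, (a:ℕ) < (b:ℕ) → Disjoint (I a) (I b) := by
      intro a b hab
      rw [hI, hI, Set.Ioc_disjoint_Ioc]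
      have h1 : ((a:ℝ) + 1) / k ≤ (b:ℝ) / k := by
        gcongr
        exact_mod_cast hab
      calc min (((a:ℝ)+1)/k) (((b:ℝ)+1)/k) ≤ ((a:ℝ)+1)/k := min_le_left _ _
        _ ≤ (b:ℝ)/k := h1
        _ ≤ max ((a:ℝ)/k) ((b:ℝ)/k) := le_max_right _ _
    intro a b hab
    rcases Nat.lt_or_ge (a:ℕ) (b:ℕ) with h | h
    · exact key a b h
    · rcases Nat.lt_or_ge (b:ℕ) (a:ℕ) with h' | h'
      · exact (key b a h').symm
      · exact absurd (Fin.ext (le_antisymm h' h)) hab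
  -- measure of cells
  have hmI : ∀ j, (volume.restrict (Icc (0:ℝ) 1)) (I j) = ENNReal.ofReal (1/k) := by
    intro j
    rw [Measure.restrict_apply' measurableSet_Icc,
      Set.inter_eq_self_of_subset_left (hIsub j), hI, Real.volume_Ioc]
    congr 1
    field_simp
    ring
  -- union of intervals
  have hIunion : (⋃ j, I j) = Ioc (0:ℝ) 1 := by
    apply Subset.antisymm
    · exact iUnion_subset hIsubIoc
    · intro x hx
      have hxk : 0 < x * k := mul_pos hx.1 hk0
      set n := Nat.ceil (x * k) with hn
      have hn1 : 1 ≤ n := Nat.one_le_ceil_iff.mpr hxk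
      have hnk : n ≤ k := Nat.ceil_le.mpr (by nlinarith [hx.2])
      refine mem_iUnion.mpr ⟨⟨n - 1, by omega⟩, ?_⟩
      rw [hI]
      have hcast : ((⟨n - 1, by omega⟩ : Fin k) : ℝ) = (n : ℝ) - 1 := by
        simp only [Fin.val_mk]
        push_cast [Nat.cast_sub hn1]
        ring
      have hceil1 : (n : ℝ) < x * k + 1 := by
        rw [hn]; exact Nat.ceil_lt_add_one (le_of_lt hxk)
      have hceil2 : x * k ≤ (n : ℝ) := Nat.le_ceil _
      constructor
      · rw [hcast, div_lt_iff₀ hk0]; linarith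
      · rw [hcast, le_div_iff₀ hk0]; linarith
  -- cells
  have hQmeas : ∀ jh : Fin k × Fin k, MeasurableSet (I jh.1 ×ˢ I jh.2) :=
    fun jh => (hImeas jh.1).prod (hImeas jh.2)
  have hQdisj : Pairwise (Function.onFun Disjoint (fun jh : Fin k × Fin k => I jh.1 ×ˢ I jh.2)) := by
    intro a b hab
    by_cases h1 : a.1 = b.1
    · have h2 : a.2 ≠ b.2 := fun h2 => hab (Prod.ext h1 h2)
      exact Set.disjoint_left.mpr fun z hz hz' => 
        Set.disjoint_left.mp (hIdisj h2) hz.2 hz'.2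
    · exact Set.disjoint_left.mpr fun z hz hz' =>
        Set.disjoint_left.mp (hIdisj h1) hz.1 hz'.1
  have hQU : (⋃ jh : Fin k × Fin k, I jh.1 ×ˢ I jh.2) = Ioc (0:ℝ) 1 ×ˢ Ioc (0:ℝ) 1 := by
    ext z
    simp only [mem_iUnion, Set.mem_prod, Prod.exists, ← hIunion]
    constructor
    · rintro ⟨j, h, hj, hh⟩; exact ⟨⟨j, hj⟩, ⟨h, hh⟩⟩
    · rintro ⟨⟨j, hj⟩, ⟨h, hh⟩⟩; exact ⟨j, h, hj, hh⟩
  -- p gives no mass outside (0,1]²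
  have hmc : (volume.restrict (Icc (0:ℝ) 1)) ((Ioc (0:ℝ) 1)ᶜ) = 0 := by
    rw [Measure.restrict_apply' measurableSet_Icc]
    have : (Ioc (0:ℝ) 1)ᶜ ∩ Icc (0:ℝ) 1 = {0} := by
      ext x
      simp only [mem_inter_iff, mem_compl_iff, mem_Ioc, mem_Icc, mem_singleton_iff, not_and,
        not_le]
      constructor
      · rintro ⟨h1, h2, h3⟩
        by_contra hx0
        have : 0 < x := lt_of_le_of_ne h2 (Ne.symm hx0)
        linarith [h1 this]
      · rintro rfl; norm_num
    rw [this, Real.volume_singleton]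
  have hpnull : p ((Ioc (0:ℝ) 1 ×ˢ Ioc (0:ℝ) 1)ᶜ) = 0 := by
    have hsub : (Ioc (0:ℝ) 1 ×ˢ Ioc (0:ℝ) 1)ᶜ ⊆
        Prod.fst ⁻¹' (Ioc (0:ℝ) 1)ᶜ ∪ Prod.snd ⁻¹' (Ioc (0:ℝ) 1)ᶜ := by
      intro z hz
      simp only [mem_compl_iff, Set.mem_prod, not_and] at hz
      by_cases h1 : z.1 ∈ Ioc (0:ℝ) 1
      · exact Or.inr (hz h1)
      · exact Or.inl h1
    apply measure_mono_null hsub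
    apply measure_union_null
    · rw [← Measure.map_apply measurable_fst measurableSet_Ioc.compl, hp1]; exact hmc
    · rw [← Measure.map_apply measurable_snd measurableSet_Ioc.compl, hp2]; exact hmc
  -- g is constant d j h on each cell, 0 outside the union
  have hgQ : ∀ (j h : Fin k) (z : ℝ × ℝ), z.1 ∈ I j → z.2 ∈ I h → g z = d j h := by
    intro j h z hz1 hz2
    rw [hg, Finset.sum_eq_single j]
    · rw [Finset.sum_eq_single h]
      · rw [Set.indicator_of_mem hz1, Set.indicator_of_mem hz2]; simp
      · intro h' _ hh'
        rw [Set.indicator_of_notMem (Set.disjoint_left.mp (hIdisj hh'.symm) hz2), mul_zero]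
      · intro habs; exact absurd (Finset.mem_univ h) habs
    · intro j' _ hj'
      apply Finset.sum_eq_zero
      intro h' _
      rw [Set.indicator_of_notMem (Set.disjoint_left.mp (hIdisj hj'.symm) hz1), mul_zero,
        zero_mul]
    · intro habs; exact absurd (Finset.mem_univ j) habs
  have hg0 : ∀ z : ℝ × ℝ, z ∉ Ioc (0:ℝ) 1 ×ˢ Ioc (0:ℝ) 1 → g z = 0 := by
    intro z hz
    simp only [Set.mem_prod, not_and] at hz
    rw [hg]
    by_cases h1 : z.1 ∈ Ioc (0:ℝ) 1
    · have h2 := hz h1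
      apply Finset.sum_eq_zero; intro j _
      apply Finset.sum_eq_zero; intro h _
      rw [Set.indicator_of_notMem (fun hm => h2 (hIsubIoc h hm)), mul_zero]
    · apply Finset.sum_eq_zero; intro j _
      apply Finset.sum_eq_zero; intro h _
      rw [Set.indicator_of_notMem (fun hm => h1 (hIsubIoc j hm)), mul_zero, zero_mul]
  set Pg := (((volume.restrict (Icc (0:ℝ) 1)).prod (volume.restrict (Icc (0:ℝ) 1))).withDensity
    (fun z => ENNReal.ofReal (g z))) with hPgdef
  -- Pg agrees with p on cells
  have hPgQ : ∀ j h : Fin k, Pg (I j ×ˢ I h) = p (I j ×ˢ I h) := by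
    intro j h
    rw [hPgdef, withDensity_apply _ ((hImeas j).prod (hImeas h))]
    rw [setLIntegral_congr_fun ((hImeas j).prod (hImeas h))
      ((fun z hz => by rw [hgQ j h z hz.1 hz.2] :
        ∀ z : ℝ × ℝ, z ∈ I j ×ˢ I h → ENNReal.ofReal (g z) = ENNReal.ofReal (d j h)))]
    rw [setLIntegral_const, Measure.prod_prod, hmI, hmI, hd]
    rw [ENNReal.ofReal_mul (by positivity), ENNReal.ofReal_toReal (measure_ne_top p _)]
    have harith : ENNReal.ofReal ((k:ℝ)^2) * (ENNReal.ofReal (1/k) * ENNReal.ofReal (1/k)) = 1 := by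
      rw [← ENNReal.ofReal_mul (by positivity), ← ENNReal.ofReal_mul (by positivity)]
      rw [show (k:ℝ)^2 * (1/k * (1/k)) = 1 by field_simp]
      exact ENNReal.ofReal_one
    calc ENNReal.ofReal ((k:ℝ)^2) * p (I j ×ˢ I h) * (ENNReal.ofReal (1/k) * ENNReal.ofReal (1/k))
        = ENNReal.ofReal ((k:ℝ)^2) * (ENNReal.ofReal (1/k) * ENNReal.ofReal (1/k)) * p (I j ×ˢ I h) :=
          mul_right_comm _ _ _
      _ = p (I j ×ˢ I h) := by rw [harith, one_mul]
  -- Pg vanishes outside (0,1]²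
  have hPgnull : Pg ((Ioc (0:ℝ) 1 ×ˢ Ioc (0:ℝ) 1)ᶜ) = 0 := by
    rw [hPgdef, withDensity_apply _ (measurableSet_Ioc.prod measurableSet_Ioc).compl]
    rw [setLIntegral_congr_fun (measurableSet_Ioc.prod measurableSet_Ioc).compl
      ((fun z hz => by rw [hg0 z hz, ENNReal.ofReal_zero] :
        ∀ z : ℝ × ℝ, z ∈ (Ioc (0:ℝ) 1 ×ˢ Ioc (0:ℝ) 1)ᶜ → ENNReal.ofReal (g z) = 0))]
    simp
  -- both measures give full mass 1 to (0,1]²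
  have hpfull : p (Ioc (0:ℝ) 1 ×ˢ Ioc (0:ℝ) 1) = 1 := by
    have h := measure_add_measure_compl (μ := p) (s := Ioc (0:ℝ) 1 ×ˢ Ioc (0:ℝ) 1)
      (measurableSet_Ioc.prod measurableSet_Ioc)
    rw [hpnull, add_zero, measure_univ] at h
    exact h
  have hPgsum : Pg (Ioc (0:ℝ) 1 ×ˢ Ioc (0:ℝ) 1) = 1 := by
    rw [← hQU, measure_iUnion hQdisj hQmeas, tsum_fintype]
    rw [Finset.sum_congr rfl (fun b _ => hPgQ b.1 b.2), ← tsum_fintype (L := SummationFilter.unconditional _),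
      ← measure_iUnion hQdisj hQmeas, hQU, hpfull]
  have hPguniv : Pg Set.univ = 1 := by
    have h := measure_add_measure_compl (μ := Pg) (s := Ioc (0:ℝ) 1 ×ˢ Ioc (0:ℝ) 1)
      (measurableSet_Ioc.prod measurableSet_Ioc)
    rw [hPgnull, add_zero, hPgsum] at h
    exact h.symm
  haveI hPgprob : IsProbabilityMeasure Pg := ⟨hPguniv⟩
  -- a.e. membership and integrability
  have hae : ∀ (μ : Measure (ℝ × ℝ)), μ ((Ioc (0:ℝ) 1 ×ˢ Ioc (0:ℝ) 1)ᶜ) = 0 →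
      ∀ᵐ z ∂μ, z ∈ Ioc (0:ℝ) 1 ×ˢ Ioc (0:ℝ) 1 := by
    intro μ h
    rw [ae_iff]
    exact measure_mono_null (fun z hz => hz) h
  have hsubS : (Ioc (0:ℝ) 1 ×ˢ Ioc (0:ℝ) 1) ⊆ Icc (0:ℝ) 1 ×ˢ Icc (0:ℝ) 1 :=
    Set.prod_mono Ioc_subset_Icc_self Ioc_subset_Icc_self
  have hint : ∀ (μ : Measure (ℝ × ℝ)), IsProbabilityMeasure μ →
      μ ((Ioc (0:ℝ) 1 ×ˢ Ioc (0:ℝ) 1)ᶜ) = 0 → Integrable φ μ := by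
    intro μ hμ h
    apply Integrable.mono' (integrable_const (1:ℝ)) hφm.aestronglyMeasurable
    filter_upwards [hae μ h] with z hz
    have hb := hφbd z (hsubS hz)
    rw [Real.norm_eq_abs, abs_le]
    exact ⟨hb.1, hb.2⟩
  have hintp := hint p inferInstance hpnull
  have hintPg := hint Pg hPgprob hPgnull
  -- decomposition of integrals over cells
  have hdecomp : ∀ (μ : Measure (ℝ × ℝ)), μ ((Ioc (0:ℝ) 1 ×ˢ Ioc (0:ℝ) 1)ᶜ) = 0 →
      Integrable φ μ →
      ∫ z, φ z ∂μ = ∑ jh : Fin k × Fin k, ∫ z in I jh.1 ×ˢ I jh.2, φ z ∂μ := by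
    intro μ h hi
    have hres : μ.restrict (⋃ jh : Fin k × Fin k, I jh.1 ×ˢ I jh.2) = μ := by
      apply Measure.restrict_eq_self_of_ae_mem
      rw [hQU]
      exact hae μ h
    conv_lhs => rw [← hres]
    rw [show ∫ z, φ z ∂(μ.restrict (⋃ jh : Fin k × Fin k, I jh.1 ×ˢ I jh.2))
        = ∫ z in (⋃ jh : Fin k × Fin k, I jh.1 ×ˢ I jh.2), φ z ∂μ from rfl,
      integral_iUnion hQmeas hQdisj (hi.integrableOn), tsum_fintype]
  -- sqrt arithmetic
  have hsqrt : Real.sqrt ((1/k)^2 + (1/k)^2) = Real.sqrt 2 / k := by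
    rw [show (1/(k:ℝ))^2 + (1/k)^2 = 2/k^2 by ring,
      Real.sqrt_div (by norm_num : (0:ℝ) ≤ 2), Real.sqrt_sq hk0.le]
  -- per-cell bound
  have hcell : ∀ (j h : Fin k),
      |(∫ z in I j ×ˢ I h, φ z ∂p) - ∫ z in I j ×ˢ I h, φ z ∂Pg| ≤
        2 * (Real.sqrt 2 / k) * (p (I j ×ˢ I h)).toReal := by
    intro j h
    set c : ℝ × ℝ := (((j:ℝ)+1)/k, ((h:ℝ)+1)/k) with hcdef
    have hc1 : c.1 = ((j:ℝ)+1)/k := rfl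
    have hc2 : c.2 = ((h:ℝ)+1)/k := rfl
    have hjk : ((j:ℕ):ℝ) + 1 ≤ k := by exact_mod_cast j.isLt
    have hhk : ((h:ℕ):ℝ) + 1 ≤ k := by exact_mod_cast h.isLt
    have hcS : c ∈ Icc (0:ℝ) 1 ×ˢ Icc (0:ℝ) 1 := by
      constructor
      · exact ⟨by rw [hc1]; positivity, by rw [hc1, div_le_one hk0]; exact hjk⟩
      · exact ⟨by rw [hc2]; positivity, by rw [hc2, div_le_one hk0]; exact hhk⟩
    have hbd : ∀ z ∈ I j ×ˢ I h, ‖φ z - φ c‖ ≤ Real.sqrt 2 / k := by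
      intro z hz
      have hzS : z ∈ Icc (0:ℝ) 1 ×ˢ Icc (0:ℝ) 1 := ⟨hIsub j hz.1, hIsub h hz.2⟩
      rw [Real.norm_eq_abs]
      refine (hφlip z c hzS hcS).trans ?_
      rw [← hsqrt]
      apply Real.sqrt_le_sqrt
      have hz1 := hz.1
      have hz2 := hz.2
      rw [hI j] at hz1
      rw [hI h] at hz2
      have hd1 : ((j:ℝ)+1)/k - (j:ℝ)/k = 1/k := by field_simp; ring
      have hd2 : ((h:ℝ)+1)/k - (h:ℝ)/k = 1/k := by field_simp; ring
      have e1 : (z.1 - c.1)^2 ≤ (1/(k:ℝ))^2 := by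
        rw [hc1]
        apply sq_le_sq'
        · have h1 := hz1.1
          linarith [hd1]
        · have h1 := hz1.2
          have hk1 : (0:ℝ) < 1/k := by positivity
          linarith
      have e2 : (z.2 - c.2)^2 ≤ (1/(k:ℝ))^2 := by
        rw [hc2]
        apply sq_le_sq'
        · have h1 := hz2.1
          linarith [hd2]
        · have h1 := hz2.2
          have hk1 : (0:ℝ) < 1/k := by positivity
          linarith
      linarith
    have hieq : ∀ (μ : Measure (ℝ × ℝ)), IsFiniteMeasure μ → Integrable φ μ →
        ∫ z in I j ×ˢ I h, φ z ∂μ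
          = (∫ z in I j ×ˢ I h, (φ z - φ c) ∂μ) + φ c * (μ (I j ×ˢ I h)).toReal := by
      intro μ hμ hi
      rw [integral_sub hi.integrableOn (integrableOn_const (measure_ne_top _ _)),
        setIntegral_const]
      simp only [smul_eq_mul, measureReal_def]
      ring
    have hnp : ‖∫ z in I j ×ˢ I h, (φ z - φ c) ∂p‖ ≤
        (Real.sqrt 2 / k) * (p (I j ×ˢ I h)).toReal :=
      norm_setIntegral_le_of_norm_le_const (measure_lt_top _ _) hbd
    have hnPg : ‖∫ z in I j ×ˢ I h, (φ z - φ c) ∂Pg‖ ≤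
        (Real.sqrt 2 / k) * (p (I j ×ˢ I h)).toReal := by
      have := norm_setIntegral_le_of_norm_le_const (μ := Pg) (measure_lt_top _ _) hbd
      rwa [measureReal_def, hPgQ j h] at this
    calc |(∫ z in I j ×ˢ I h, φ z ∂p) - ∫ z in I j ×ˢ I h, φ z ∂Pg|
        = |(∫ z in I j ×ˢ I h, (φ z - φ c) ∂p) - ∫ z in I j ×ˢ I h, (φ z - φ c) ∂Pg| := by
          rw [hieq p inferInstance hintp, hieq Pg inferInstance hintPg, hPgQ j h]
          congr 1
          ring
      _ ≤ ‖∫ z in I j ×ˢ I h, (φ z - φ c) ∂p‖ + ‖∫ z in I j ×ˢ I h, (φ z - φ c) ∂Pg‖ := by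
          rw [Real.norm_eq_abs, Real.norm_eq_abs]
          exact abs_sub _ _
      _ ≤ (Real.sqrt 2 / k) * (p (I j ×ˢ I h)).toReal
            + (Real.sqrt 2 / k) * (p (I j ×ˢ I h)).toReal := add_le_add hnp hnPg
      _ = 2 * (Real.sqrt 2 / k) * (p (I j ×ˢ I h)).toReal := by ring
  -- put everything together
  rw [hdecomp p hpnull hintp, hdecomp Pg hPgnull hintPg, ← Finset.sum_sub_distrib]
  refine (Finset.abs_sum_le_sum_abs _ _).trans ?_
  refine (Finset.sum_le_sum (fun jh _ => hcell jh.1 jh.2)).trans ?_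
  rw [← Finset.mul_sum]
  have hsum1 : ∑ jh : Fin k × Fin k, (p (I jh.1 ×ˢ I jh.2)).toReal = 1 := by
    rw [← ENNReal.toReal_sum (fun a _ => measure_ne_top p _), ← tsum_fintype (L := SummationFilter.unconditional _),
      ← measure_iUnion hQdisj hQmeas, hQU, hpfull, ENNReal.toReal_one]
  rw [hsum1, mul_one]
  exact le_of_eq (mul_div_assoc 2 (Real.sqrt 2) (k:ℝ)).symm
end

section
/- Let F_μ, F_ν be the cumulative distribution functions of Borel probability measures μ, ν on ℝ, and let C : [0,1]² → [0,1] be a (bivariate) copula. Then F(x,y) = C(F_μ(x), F_ν(y)) is the cumulative distribution function of a Borel probability measure on ℝ² whose marginal distribution functions are F_μ and F_ν. -/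
open MeasureTheory Set Filter ProbabilityTheory Topology

noncomputable def quant (μ : Measure ℝ) (u : ℝ) : ℝ :=
  if u ∈ Ioo (0:ℝ) 1 then sInf {t | u ≤ cdf μ t} else 0

lemma quant_le_iff (μ : Measure ℝ) [IsProbabilityMeasure μ] {u : ℝ}
    (hu : u ∈ Ioo (0:ℝ) 1) (x : ℝ) : quant μ u ≤ x ↔ u ≤ cdf μ x := by
  rw [quant, if_pos hu]
  set S := {t | u ≤ cdf μ t} with hS
  have hne : S.Nonempty := by
    obtain ⟨t, ht⟩ := ((tendsto_cdf_atTop μ).eventually (eventually_gt_nhds hu.2)).exists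
    exact ⟨t, le_of_lt ht⟩
  have hbdd : BddBelow S := by
    obtain ⟨b, hb⟩ := eventually_atBot.1
      ((tendsto_cdf_atBot μ).eventually (eventually_lt_nhds hu.1))
    refine ⟨b, fun t ht => ?_⟩
    by_contra h
    exact absurd ht (not_le.2 (hb t (le_of_lt (not_le.1 h))))
  constructor
  · intro h
    have hall : ∀ t ∈ Ioi x, u ≤ cdf μ t := by
      intro t ht
      obtain ⟨s, hs, hst⟩ := exists_lt_of_csInf_lt hne (lt_of_le_of_lt h ht)
      exact le_trans hs (monotone_cdf μ hst.le)
    have hc : Tendsto (cdf μ) (𝓝[>] x) (𝓝 (cdf μ x)) :=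
      ((cdf μ).right_continuous x).tendsto.mono_left
        (nhdsWithin_mono x Ioi_subset_Ici_self)
    exact ge_of_tendsto hc (eventually_nhdsWithin_of_forall hall)
  · intro h
    exact csInf_le hbdd h

lemma measurable_quant (μ : Measure ℝ) [IsProbabilityMeasure μ] :
    Measurable (quant μ) := by
  refine measurable_of_Iic fun x => ?_
  have : quant μ ⁻¹' Iic x =
      (Ioo (0:ℝ) 1 ∩ Iic (cdf μ x)) ∪ ((Ioo (0:ℝ) 1)ᶜ ∩ {u : ℝ | (0:ℝ) ≤ x}) := by
    ext u
    by_cases h : u ∈ Ioo (0:ℝ) 1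
    · simp [mem_preimage, h, quant_le_iff μ h x, mem_Iic]
    · simp [mem_preimage, h, quant, mem_Iic]
  rw [this]
  by_cases hx : (0:ℝ) ≤ x
  · have : {u : ℝ | (0:ℝ) ≤ x} = univ := eq_univ_of_forall fun _ => hx
    rw [this]
    exact (measurableSet_Ioo.inter measurableSet_Iic).union
      (measurableSet_Ioo.compl.inter MeasurableSet.univ)
  · have : {u : ℝ | (0:ℝ) ≤ x} = ∅ := eq_empty_of_forall_notMem fun _ => hx
    rw [this]
    simp [measurableSet_Ioo.inter measurableSet_Iic]

lemma measure_eq_of_inter {α} {m : MeasurableSpace α} (γ : Measure α) {A B S : Set α}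
    (hS : γ Sᶜ = 0) (h : A ∩ S = B ∩ S) : γ A = γ B := by
  apply measure_congr
  rw [ae_eq_set]
  constructor <;> refine measure_mono_null (fun z hz => ?_) hS
  · intro hzS
    exact hz.2 (h ▸ (mem_inter hz.1 hzS) : z ∈ B ∩ S).1
  · intro hzS
    exact hz.2 (h.symm ▸ (mem_inter hz.1 hzS) : z ∈ A ∩ S).1

theorem stmt16
    (μ ν : Measure ℝ) [IsProbabilityMeasure μ] [IsProbabilityMeasure ν]
    (Fμ Fν : ℝ → ℝ)
    (hFμ : ∀ x, Fμ x = (μ (Iic x)).toReal)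
    (hFν : ∀ y, Fν y = (ν (Iic y)).toReal)
    -- `C` is a bivariate copula: the restriction to `[0,1]²` of the joint CDF of a
    -- probability measure `γ` on `ℝ²` whose marginals are uniform on `[0,1]`
    (C : ℝ → ℝ → ℝ) (γ : Measure (ℝ × ℝ)) [IsProbabilityMeasure γ]
    (hγ1 : γ.map Prod.fst = volume.restrict (Icc (0:ℝ) 1))
    (hγ2 : γ.map Prod.snd = volume.restrict (Icc (0:ℝ) 1))
    (hC : ∀ u ∈ Icc (0:ℝ) 1, ∀ v ∈ Icc (0:ℝ) 1,
      C u v = (γ (Iic u ×ˢ Iic v)).toReal) :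
    ∃ p : Measure (ℝ × ℝ), IsProbabilityMeasure p ∧
      (∀ x y : ℝ, (p (Iic x ×ˢ Iic y)).toReal = C (Fμ x) (Fν y)) ∧
      (∀ x : ℝ, (p (Iic x ×ˢ (univ : Set ℝ))).toReal = Fμ x) ∧
      (∀ y : ℝ, (p ((univ : Set ℝ) ×ˢ Iic y)).toReal = Fν y) := by
  have hFμ' : ∀ x, Fμ x = cdf μ x := fun x => (hFμ x).trans (cdf_eq_real μ x).symm
  have hFν' : ∀ y, Fν y = cdf ν y := fun y => (hFν y).trans (cdf_eq_real ν y).symm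
  have hmemμ : ∀ x, cdf μ x ∈ Icc (0:ℝ) 1 := fun x => ⟨cdf_nonneg μ x, cdf_le_one μ x⟩
  have hmemν : ∀ y, cdf ν y ∈ Icc (0:ℝ) 1 := fun y => ⟨cdf_nonneg ν y, cdf_le_one ν y⟩
  set T : ℝ × ℝ → ℝ × ℝ := fun z => (quant μ z.1, quant ν z.2) with hTdef
  have hT : Measurable T :=
    ((measurable_quant μ).comp measurable_fst).prodMk
      ((measurable_quant ν).comp measurable_snd)
  -- the bad set is null
  have hvol : volume ((Ioo (0:ℝ) 1)ᶜ ∩ Icc (0:ℝ) 1) = 0 := by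
    have : (Ioo (0:ℝ) 1)ᶜ ∩ Icc (0:ℝ) 1 = Icc (0:ℝ) 1 \ Ioo 0 1 := by
      rw [diff_eq, inter_comm]
    rw [this, Icc_diff_Ioo_same (by norm_num : (0:ℝ) ≤ 1)]
    exact ((Set.finite_singleton _).insert _).measure_zero _
  have hS1 : γ ((Ioo (0:ℝ) 1)ᶜ ×ˢ (univ : Set ℝ)) = 0 := by
    have he : (Ioo (0:ℝ) 1)ᶜ ×ˢ (univ : Set ℝ) = Prod.fst ⁻¹' (Ioo (0:ℝ) 1)ᶜ := by
      ext z; simp [mem_prod]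
    rw [he, ← Measure.map_apply measurable_fst measurableSet_Ioo.compl, hγ1,
      Measure.restrict_apply measurableSet_Ioo.compl]
    exact hvol
  have hS2 : γ ((univ : Set ℝ) ×ˢ (Ioo (0:ℝ) 1)ᶜ) = 0 := by
    have he : (univ : Set ℝ) ×ˢ (Ioo (0:ℝ) 1)ᶜ = Prod.snd ⁻¹' (Ioo (0:ℝ) 1)ᶜ := by
      ext z; simp [mem_prod]
    rw [he, ← Measure.map_apply measurable_snd measurableSet_Ioo.compl, hγ2,
      Measure.restrict_apply measurableSet_Ioo.compl]
    exact hvol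
  set S : Set (ℝ × ℝ) := Ioo (0:ℝ) 1 ×ˢ Ioo (0:ℝ) 1 with hSdef
  have hS : γ Sᶜ = 0 := by
    refine measure_mono_null (fun z hz => ?_)
      (measure_union_null hS1 hS2)
    simp only [hSdef, mem_compl_iff, mem_prod, not_and_or] at hz
    rcases hz with h | h
    · exact Or.inl (by simp [mem_prod, h])
    · exact Or.inr (by simp [mem_prod, h])
  -- uniform marginal value
  have huni : ∀ c ∈ Icc (0:ℝ) 1, (volume.restrict (Icc (0:ℝ) 1)) (Iic c) = ENNReal.ofReal c := by
    intro c hc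
    rw [Measure.restrict_apply measurableSet_Iic]
    have : Iic c ∩ Icc (0:ℝ) 1 = Icc 0 c := by
      ext t
      simp only [mem_inter_iff, mem_Iic, mem_Icc]
      exact ⟨fun h => ⟨h.2.1, h.1⟩, fun h => ⟨h.2, h.1, h.2.trans hc.2⟩⟩
    rw [this, Real.volume_Icc, sub_zero]
  refine ⟨γ.map T, Measure.isProbabilityMeasure_map hT.aemeasurable, ?_, ?_, ?_⟩
  · intro x y
    rw [Measure.map_apply hT (measurableSet_Iic.prod measurableSet_Iic)]
    have hkey : T ⁻¹' (Iic x ×ˢ Iic y) ∩ S = (Iic (cdf μ x) ×ˢ Iic (cdf ν y)) ∩ S := by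
      ext z
      simp only [hSdef, mem_inter_iff, mem_preimage, mem_prod, mem_Iic, hTdef]
      constructor
      · rintro ⟨⟨h1, h2⟩, hz1, hz2⟩
        exact ⟨⟨(quant_le_iff μ hz1 x).1 h1, (quant_le_iff ν hz2 y).1 h2⟩, hz1, hz2⟩
      · rintro ⟨⟨h1, h2⟩, hz1, hz2⟩
        exact ⟨⟨(quant_le_iff μ hz1 x).2 h1, (quant_le_iff ν hz2 y).2 h2⟩, hz1, hz2⟩
    rw [measure_eq_of_inter γ hS hkey, hFμ', hFν', hC _ (hmemμ x) _ (hmemν y)]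
  · intro x
    rw [Measure.map_apply hT (measurableSet_Iic.prod MeasurableSet.univ)]
    have hkey : T ⁻¹' (Iic x ×ˢ (univ : Set ℝ)) ∩ ((Ioo (0:ℝ) 1) ×ˢ (univ : Set ℝ))
        = (Iic (cdf μ x) ×ˢ (univ : Set ℝ)) ∩ ((Ioo (0:ℝ) 1) ×ˢ (univ : Set ℝ)) := by
      ext z
      simp only [mem_inter_iff, mem_preimage, mem_prod, mem_Iic, mem_univ, and_true, hTdef]
      exact ⟨fun ⟨h1, hz1⟩ => ⟨(quant_le_iff μ hz1 x).1 h1, hz1⟩,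
        fun ⟨h1, hz1⟩ => ⟨(quant_le_iff μ hz1 x).2 h1, hz1⟩⟩
    have hc1 : γ ((Ioo (0:ℝ) 1 ×ˢ (univ : Set ℝ)))ᶜ = 0 := by
      have he : ((Ioo (0:ℝ) 1) ×ˢ (univ : Set ℝ))ᶜ = (Ioo (0:ℝ) 1)ᶜ ×ˢ (univ : Set ℝ) := by
        ext z; simp [mem_prod]
      rw [he]; exact hS1
    rw [measure_eq_of_inter γ hc1 hkey]
    have he : Iic (cdf μ x) ×ˢ (univ : Set ℝ) = Prod.fst ⁻¹' Iic (cdf μ x) := by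
      ext z; simp [mem_prod]
    rw [he, ← Measure.map_apply measurable_fst measurableSet_Iic, hγ1,
      huni _ (hmemμ x), ENNReal.toReal_ofReal (hmemμ x).1, hFμ']
  · intro y
    rw [Measure.map_apply hT (MeasurableSet.univ.prod measurableSet_Iic)]
    have hkey : T ⁻¹' ((univ : Set ℝ) ×ˢ Iic y) ∩ ((univ : Set ℝ) ×ˢ (Ioo (0:ℝ) 1))
        = ((univ : Set ℝ) ×ˢ Iic (cdf ν y)) ∩ ((univ : Set ℝ) ×ˢ (Ioo (0:ℝ) 1)) := by
      ext z
      simp only [mem_inter_iff, mem_preimage, mem_prod, mem_Iic, mem_univ, true_and, hTdef]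
      exact ⟨fun ⟨h1, hz1⟩ => ⟨(quant_le_iff ν hz1 y).1 h1, hz1⟩,
        fun ⟨h1, hz1⟩ => ⟨(quant_le_iff ν hz1 y).2 h1, hz1⟩⟩
    have hc1 : γ (((univ : Set ℝ) ×ˢ Ioo (0:ℝ) 1))ᶜ = 0 := by
      have he : ((univ : Set ℝ) ×ˢ (Ioo (0:ℝ) 1))ᶜ = (univ : Set ℝ) ×ˢ (Ioo (0:ℝ) 1)ᶜ := by
        ext z; simp [mem_prod]
      rw [he]; exact hS2
    rw [measure_eq_of_inter γ hc1 hkey]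
    have he : (univ : Set ℝ) ×ˢ Iic (cdf ν y) = Prod.snd ⁻¹' Iic (cdf ν y) := by
      ext z; simp [mem_prod]
    rw [he, ← Measure.map_apply measurable_snd measurableSet_Iic, hγ2,
      huni _ (hmemν y), ENNReal.toReal_ofReal (hmemν y).1, hFν']
end
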